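/- (Compositionality for generalised composition, unbounded time) Let 𝕊 and 𝕊′ be quantum systems with disjoint command sets C ∩ C′ = ∅, and let ↝ (on A) and ↝′ (on A′) be compatible policies. Let 𝕋 be a generalised composition of 𝕊 and 𝕊′ whose initial state σ0 is separable and all of whose super-operators 𝓕_{a,c} are commutative and separable. Then K(𝕋, ↝ ∪ ↝′) ≤ SK(𝕊, ↝) + SK(𝕊′, ↝′). -/

import Mathlib

open scoped Classical ComplexOrder
open Matrix Kronecker

noncomputable section

/-- A density operator: positive semidefinite with trace 1. -/
def IsDensity {d : Type} [Fintype d] [DecidableEq d] (ρ : Matrix d d ℂ) : Prop :=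
  ρ.PosSemidef ∧ ρ.trace = 1

/-- A super-operator: a linear, positive, trace-preserving map on matrices. -/
def IsSuperOp {d : Type} [Fintype d] [DecidableEq d]
    (F : Matrix d d ℂ → Matrix d d ℂ) : Prop :=
  IsLinearMap ℂ F ∧ (∀ ρ : Matrix d d ℂ, ρ.PosSemidef → (F ρ).PosSemidef) ∧
    (∀ ρ : Matrix d d ℂ, (F ρ).trace = ρ.trace)

/-- A finite family of matrices (the data of a measurement). -/
structure PMeas (d : Type) where
  m : ℕ
  E : Fin m → Matrix d d ℂ

/-- The family is a POVM: positive semidefinite elements summing to the identity. -/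
def PMeas.IsPOVM {d : Type} [Fintype d] [DecidableEq d] (P : PMeas d) : Prop :=
  (∀ i, (P.E i).PosSemidef) ∧ ∑ i, P.E i = 1

/-- The distance between outcome distributions of a measurement on two states. -/
def dE {d : Type} [Fintype d] (P : PMeas d) (ρ σ : Matrix d d ℂ) : ℝ :=
  (1 / 2) * ∑ i, ‖(P.E i * ρ).trace - (P.E i * σ).trace‖

/-- The measurement pseudo-distance induced by a set of measurements. -/
def dM {d : Type} [Fintype d] (M : Set (PMeas d)) (ρ σ : Matrix d d ℂ) : ℝ :=
  sSup { x | ∃ P ∈ M, x = dE P ρ σ }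

/-- A quantum system: initial state, agents, commands, super-operators, measurements. -/
structure QSystem (Agent Cmd d : Type) where
  ρ0 : Matrix d d ℂ
  A : Set Agent
  C : Set Cmd
  Ecmd : Agent → Cmd → Matrix d d ℂ → Matrix d d ℂ
  M : Agent → Set (PMeas d)

/-- Well-formedness: the initial state is a density operator, commands act as
super-operators, and agents measure with POVMs. -/
def QSystem.WellFormed {Agent Cmd d : Type} [Fintype d] [DecidableEq d]
    (S : QSystem Agent Cmd d) : Prop :=
  IsDensity S.ρ0 ∧ (∀ a ∈ S.A, ∀ c ∈ S.C, IsSuperOp (S.Ecmd a c)) ∧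
    (∀ a ∈ S.A, ∀ P ∈ S.M a, P.IsPOVM)

/-- Execution of a finite action sequence (composition of super-operators, in order). -/
def QSystem.run {Agent Cmd d : Type} (S : QSystem Agent Cmd d)
    (α : List (Agent × Cmd)) (ρ : Matrix d d ℂ) : Matrix d d ℂ :=
  α.foldl (fun τ p => S.Ecmd p.1 p.2 τ) ρ

/-- A sequence over A × C. -/
def QSystem.Valid {Agent Cmd d : Type} (S : QSystem Agent Cmd d)
    (α : List (Agent × Cmd)) : Prop :=
  ∀ p ∈ α, p.1 ∈ S.A ∧ p.2 ∈ S.C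

/-- `purge G D α` deletes from `α` every pair `(a, c)` with `a ∈ G` and `c ∈ D`. -/
def purge {Agent Cmd : Type} (G : Set Agent) (D : Set Cmd) :
    List (Agent × Cmd) → List (Agent × Cmd)
  | [] => []
  | p :: rest => if p.1 ∈ G ∧ p.2 ∈ D then purge G D rest else p :: purge G D rest

/-- A reachable density operator. -/
def QSystem.Reachable {Agent Cmd d : Type} (S : QSystem Agent Cmd d)
    (ρ : Matrix d d ℂ) : Prop :=
  ∃ α, S.Valid α ∧ S.run α S.ρ0 = ρ

/-- `∇ a`: the set of agents from which information may not flow to `a`. -/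
def nabla {Agent : Type} (pol : Agent → Agent → Prop) (a : Agent) : Set Agent :=
  { b | ¬ pol b a }

/-- The security degree `K(𝕊,↝)`. -/
def Kdeg {Agent Cmd d : Type} [Fintype d] (S : QSystem Agent Cmd d)
    (pol : Agent → Agent → Prop) : ℝ :=
  sSup { x | ∃ a ∈ S.A, ∃ α, S.Valid α ∧
    x = dM (S.M a) (S.run α S.ρ0) (S.run (purge (nabla pol a) Set.univ α) S.ρ0) }

/-- The `t`-bounded security degree `K_t(𝕊,↝)`. -/
def Kt {Agent Cmd d : Type} [Fintype d] (S : QSystem Agent Cmd d)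
    (pol : Agent → Agent → Prop) (t : ℕ) : ℝ :=
  sSup { x | ∃ a ∈ S.A, ∃ α, S.Valid α ∧ α.length ≤ t ∧
    x = dM (S.M a) (S.run α S.ρ0) (S.run (purge (nabla pol a) Set.univ α) S.ρ0) }

/-- The interference degree `Int(G₁, D | G₂)`. -/
def IntDeg {Agent Cmd d : Type} [Fintype d] (S : QSystem Agent Cmd d)
    (G1 : Set Agent) (D : Set Cmd) (G2 : Set Agent) : ℝ :=
  sSup { x | ∃ a ∈ G2, ∃ α, S.Valid α ∧
    x = dM (S.M a) (S.run α S.ρ0) (S.run (purge G1 D α) S.ρ0) }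

/-- Trace distance `d(ρ,σ) = (1/2)·tr √((ρ−σ)†(ρ−σ))`. -/
def traceDist {d : Type} [Fintype d] [DecidableEq d] (ρ σ : Matrix d d ℂ) : ℝ :=
  (1 / 2) * (((Matrix.posSemidef_conjTranspose_mul_self (ρ - σ)).isHermitian.eigenvectorUnitary.1 *
    Matrix.diagonal (fun i => ((Real.sqrt
      ((Matrix.posSemidef_conjTranspose_mul_self (ρ - σ)).isHermitian.eigenvalues i) : ℝ) : ℂ)) *
    (star (Matrix.posSemidef_conjTranspose_mul_self (ρ - σ)).isHermitian.eigenvectorUnitary :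
      Matrix d d ℂ)).trace).re

end
noncomputable section

/-- Partial trace over the second factor: `(tr₂ σ)(i,j) = ∑_k σ((i,k),(j,k))`. -/
def ptrace2 {d1 d2 : Type} [Fintype d2]
    (σ : Matrix (d1 × d2) (d1 × d2) ℂ) : Matrix d1 d1 ℂ :=
  Matrix.of fun i j => ∑ k, σ (i, k) (j, k)

/-- Partial trace over the first factor: `(tr₁ σ)(k,l) = ∑_i σ((i,k),(i,l))`. -/
def ptrace1 {d1 d2 : Type} [Fintype d1]
    (σ : Matrix (d1 × d2) (d1 × d2) ℂ) : Matrix d2 d2 ℂ :=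
  Matrix.of fun k l => ∑ i, σ (i, k) (i, l)

/-- `𝓕` is a cylindrical extension of `𝓔` (acting on the first factor). -/
def CylExtLeft {n n' : ℕ}
    (E : Matrix (Fin n) (Fin n) ℂ → Matrix (Fin n) (Fin n) ℂ)
    (F : Matrix (Fin n × Fin n') (Fin n × Fin n') ℂ →
         Matrix (Fin n × Fin n') (Fin n × Fin n') ℂ) : Prop :=
  (∀ ρ : Matrix (Fin n) (Fin n) ℂ, IsDensity ρ →
    ptrace2 (F (ρ ⊗ₖ (((n' : ℂ))⁻¹ • (1 : Matrix (Fin n') (Fin n') ℂ)))) = E ρ) ∧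
  (∀ ρ' : Matrix (Fin n') (Fin n') ℂ, IsDensity ρ' →
    ptrace1 (F ((((n : ℂ))⁻¹ • (1 : Matrix (Fin n) (Fin n) ℂ)) ⊗ₖ ρ')) = ρ')

/-- `𝓕` is a cylindrical extension of `𝓔′` (acting on the second factor). -/
def CylExtRight {n n' : ℕ}
    (E' : Matrix (Fin n') (Fin n') ℂ → Matrix (Fin n') (Fin n') ℂ)
    (F : Matrix (Fin n × Fin n') (Fin n × Fin n') ℂ →
         Matrix (Fin n × Fin n') (Fin n × Fin n') ℂ) : Prop :=
  (∀ ρ' : Matrix (Fin n') (Fin n') ℂ, IsDensity ρ' →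
    ptrace1 (F ((((n : ℂ))⁻¹ • (1 : Matrix (Fin n) (Fin n) ℂ)) ⊗ₖ ρ')) = E' ρ') ∧
  (∀ ρ : Matrix (Fin n) (Fin n) ℂ, IsDensity ρ →
    ptrace2 (F (ρ ⊗ₖ (((n' : ℂ))⁻¹ • (1 : Matrix (Fin n') (Fin n') ℂ)))) = ρ)

/-- A separable state on the composite system. -/
def SeparableState {d1 d2 : Type} [Fintype d1] [DecidableEq d1]
    [Fintype d2] [DecidableEq d2] (σ : Matrix (d1 × d2) (d1 × d2) ℂ) : Prop :=
  ∃ (m : ℕ) (p : Fin m → ℝ) (ρ : Fin m → Matrix d1 d1 ℂ)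
    (ρ' : Fin m → Matrix d2 d2 ℂ),
    (∀ i, 0 ≤ p i) ∧ (∑ i, p i = 1) ∧
    (∀ i, IsDensity (ρ i)) ∧ (∀ i, IsDensity (ρ' i)) ∧
    σ = ∑ i, (p i : ℂ) • (ρ i ⊗ₖ ρ' i)

/-- A commutative separable super-operator on the composite system:
`𝓕(σ) = ∑_i (F_i ⊗ F_i′) σ (F_i† ⊗ F_i′†)` with each family commuting. -/
def CommSeparableOp {d1 d2 : Type} [Fintype d1] [Fintype d2]
    (F : Matrix (d1 × d2) (d1 × d2) ℂ → Matrix (d1 × d2) (d1 × d2) ℂ) : Prop :=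
  ∃ (m : ℕ) (G : Fin m → Matrix d1 d1 ℂ) (G' : Fin m → Matrix d2 d2 ℂ),
    (∀ i j, G i * G j = G j * G i) ∧ (∀ i j, G' i * G' j = G' j * G' i) ∧
    ∀ σ, F σ = ∑ i, (G i ⊗ₖ G' i) * σ * (G i ⊗ₖ G' i)ᴴ

/-- Lift a measurement on the first subsystem to the composite system: `E_λ ↦ E_λ ⊗ I`. -/
def PMeas.liftLeft {d1 d2 : Type} [Fintype d2] [DecidableEq d2]
    (P : PMeas d1) : PMeas (d1 × d2) where
  m := P.m
  E := fun i => P.E i ⊗ₖ (1 : Matrix d2 d2 ℂ)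

/-- Lift a measurement on the second subsystem to the composite system: `E_λ ↦ I ⊗ E_λ`. -/
def PMeas.liftRight {d1 d2 : Type} [Fintype d1] [DecidableEq d1]
    (P : PMeas d2) : PMeas (d1 × d2) where
  m := P.m
  E := fun i => (1 : Matrix d1 d1 ℂ) ⊗ₖ P.E i

/-- `𝕋` is a generalised composition of `𝕊` and `𝕊′`. -/
def IsGenComp {Agent Cmd : Type} {n n' : ℕ}
    (S : QSystem Agent Cmd (Fin n)) (S' : QSystem Agent Cmd (Fin n'))
    (T : QSystem Agent Cmd (Fin n × Fin n')) : Prop :=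
  T.A = S.A ∪ S'.A ∧ T.C = S.C ∪ S'.C ∧
  IsDensity T.ρ0 ∧ ptrace2 T.ρ0 = S.ρ0 ∧ ptrace1 T.ρ0 = S'.ρ0 ∧
  (∀ a c, ((a ∈ S.A \ S'.A ∧ c ∈ S'.C) ∨ (a ∈ S'.A \ S.A ∧ c ∈ S.C)) →
    T.Ecmd a c = id) ∧
  (∀ a ∈ S.A, ∀ c ∈ S.C, CylExtLeft (S.Ecmd a c) (T.Ecmd a c)) ∧
  (∀ a ∈ S'.A, ∀ c ∈ S'.C, CylExtRight (S'.Ecmd a c) (T.Ecmd a c)) ∧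
  (∀ a, T.M a =
    (if a ∈ S.A then PMeas.liftLeft '' S.M a else ∅) ∪
    (if a ∈ S'.A then PMeas.liftRight '' S'.M a else ∅))

/-- `𝕊[ρ′]`: the system `𝕊` with its initial state replaced by `ρ′`. -/
def QSystem.withInit {Agent Cmd d : Type} (S : QSystem Agent Cmd d)
    (ρ : Matrix d d ℂ) : QSystem Agent Cmd d :=
  { S with ρ0 := ρ }

/-- The strong security degree `SK(𝕊,↝)`. -/
def SK {Agent Cmd d : Type} [Fintype d] [DecidableEq d]
    (S : QSystem Agent Cmd d) (pol : Agent → Agent → Prop) : ℝ :=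
  sSup { x | ∃ (m : ℕ) (p : Fin m → ℝ) (ρ : Fin m → Matrix d d ℂ),
    (∀ i, 0 ≤ p i) ∧ (∑ i, p i = 1) ∧ (∀ i, IsDensity (ρ i)) ∧
    S.ρ0 = ∑ i, (p i : ℂ) • ρ i ∧
    x = ∑ i, p i * Kdeg (S.withInit (ρ i)) pol }

/-- The strong `t`-bounded security degree `SK_t(𝕊,↝)`. -/
def SKt {Agent Cmd d : Type} [Fintype d] [DecidableEq d]
    (S : QSystem Agent Cmd d) (pol : Agent → Agent → Prop) (t : ℕ) : ℝ :=
  sSup { x | ∃ (m : ℕ) (p : Fin m → ℝ) (ρ : Fin m → Matrix d d ℂ),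
    (∀ i, 0 ≤ p i) ∧ (∑ i, p i = 1) ∧ (∀ i, IsDensity (ρ i)) ∧
    S.ρ0 = ∑ i, (p i : ℂ) • ρ i ∧
    x = ∑ i, p i * Kt (S.withInit (ρ i)) pol t }

/-- Two policies are compatible if they agree on common agents. -/
def Compatible {Agent : Type} (A A' : Set Agent)
    (pol pol' : Agent → Agent → Prop) : Prop :=
  ∀ a ∈ A ∩ A', ∀ b ∈ A ∩ A', (pol a b ↔ pol' a b)

/-- The union `↝ ∪ ↝′` of a policy on `A` and a policy on `A′`. -/
def polUnion {Agent : Type} (A A' : Set Agent)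
    (pol pol' : Agent → Agent → Prop) : Agent → Agent → Prop :=
  fun a b => (a ∈ A ∧ b ∈ A ∧ pol a b) ∨ (a ∈ A' ∧ b ∈ A' ∧ pol' a b)

end
noncomputable section


lemma cabs_of_nonneg {z : ℂ} (h : 0 ≤ z) : (‖z‖ : ℝ) = z.re := by
  obtain ⟨hre, him⟩ := Complex.nonneg_iff.mp h
  rw [Complex.norm_def, Complex.normSq_apply, ← him]
  simpa using Real.sqrt_mul_self hre

lemma psd_diag_nonneg {d : Type} [Fintype d] [DecidableEq d] {A : Matrix d d ℂ}
    (hA : A.PosSemidef) (i : d) : 0 ≤ A i i := by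
  exact hA.diag_nonneg

lemma psd_trace_nonneg {d : Type} [Fintype d] [DecidableEq d] {A : Matrix d d ℂ}
    (hA : A.PosSemidef) : 0 ≤ A.trace :=
  Finset.sum_nonneg fun i _ => psd_diag_nonneg hA i

lemma psd_trace_mul_nonneg {d : Type} [Fintype d] [DecidableEq d] {A B : Matrix d d ℂ}
    (hA : A.PosSemidef) (hB : B.PosSemidef) : 0 ≤ (A * B).trace := by
  obtain ⟨k, v, rfl⟩ := Matrix.posSemidef_iff_eq_sum_vecMulVec.mp hA
  rw [Finset.sum_mul, Matrix.trace_sum]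
  refine Finset.sum_nonneg fun i _ => ?_
  rw [Matrix.vecMulVec_eq Unit, Matrix.mul_assoc, Matrix.trace_mul_comm]
  have h := hB.mul_mul_conjTranspose_same (Matrix.replicateCol Unit (v i))ᴴ
  rw [Matrix.conjTranspose_conjTranspose, Matrix.conjTranspose_replicateCol] at h
  exact psd_trace_nonneg h


lemma ptrace2_kron {d1 d2 : Type} [Fintype d2] (A : Matrix d1 d1 ℂ) (B : Matrix d2 d2 ℂ) :
    ptrace2 (A ⊗ₖ B) = B.trace • A := by
  ext i j
  simp only [ptrace2, Matrix.trace, Matrix.diag, Matrix.of_apply, Matrix.kroneckerMap_apply,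
    Matrix.smul_apply, smul_eq_mul]
  rw [Finset.sum_mul]
  exact Finset.sum_congr rfl fun x _ => mul_comm _ _

lemma ptrace1_kron {d1 d2 : Type} [Fintype d1] (A : Matrix d1 d1 ℂ) (B : Matrix d2 d2 ℂ) :
    ptrace1 (A ⊗ₖ B) = A.trace • B := by
  ext k l
  simp only [ptrace1, Matrix.trace, Matrix.diag, Matrix.of_apply, Matrix.kroneckerMap_apply,
    Matrix.smul_apply, smul_eq_mul]
  rw [Finset.sum_mul]

lemma ptrace2_sum {d1 d2 : Type} [Fintype d2] {m : ℕ} (f : Fin m → Matrix (d1 × d2) (d1 × d2) ℂ) :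
    ptrace2 (∑ i, f i) = ∑ i, ptrace2 (f i) := by
  ext a b
  simp only [ptrace2, Matrix.sum_apply, Matrix.of_apply]
  rw [Finset.sum_comm]

lemma ptrace1_sum {d1 d2 : Type} [Fintype d1] {m : ℕ} (f : Fin m → Matrix (d1 × d2) (d1 × d2) ℂ) :
    ptrace1 (∑ i, f i) = ∑ i, ptrace1 (f i) := by
  ext a b
  simp only [ptrace1, Matrix.sum_apply, Matrix.of_apply]
  rw [Finset.sum_comm]

lemma kron_conjTranspose {d1 d2 : Type} (A : Matrix d1 d1 ℂ) (B : Matrix d2 d2 ℂ) :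
    (A ⊗ₖ B)ᴴ = Aᴴ ⊗ₖ Bᴴ := by
  ext ⟨i,k⟩ ⟨j,l⟩
  simp [Matrix.conjTranspose_apply, Matrix.kroneckerMap_apply]

lemma sum_kron {d1 d2 : Type} {m : ℕ} (f : Fin m → Matrix d1 d1 ℂ) (B : Matrix d2 d2 ℂ) :
    (∑ i, f i) ⊗ₖ B = ∑ i, f i ⊗ₖ B := by
  ext ⟨i,k⟩ ⟨j,l⟩
  simp [Matrix.kroneckerMap_apply, Matrix.sum_apply, Finset.sum_mul]

lemma kron_sum {d1 d2 : Type} {m : ℕ} (A : Matrix d1 d1 ℂ) (f : Fin m → Matrix d2 d2 ℂ) :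
    A ⊗ₖ (∑ i, f i) = ∑ i, A ⊗ₖ f i := by
  ext ⟨i,k⟩ ⟨j,l⟩
  simp [Matrix.kroneckerMap_apply, Matrix.sum_apply, Finset.mul_sum]

lemma kron_mul_kron_mul {d1 d2 : Type} [Fintype d1] [Fintype d2]
    (G A : Matrix d1 d1 ℂ) (G' B : Matrix d2 d2 ℂ) :
    (G ⊗ₖ G') * (A ⊗ₖ B) * (G ⊗ₖ G')ᴴ = (G * A * Gᴴ) ⊗ₖ (G' * B * G'ᴴ) := by
  rw [kron_conjTranspose, ← Matrix.mul_kronecker_mul, ← Matrix.mul_kronecker_mul]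
lemma span_of_orth {d : Type} [Fintype d] [DecidableEq d] {v w : d → ℂ} (hv : v ≠ 0)
    (h : ∀ u : d → ℂ, dotProduct (star v) u = 0 → dotProduct (star w) u = 0) :
    ∃ c : ℂ, w = c • v := by
  have hvv : dotProduct (star v) v ≠ 0 := fun h0 => hv (dotProduct_star_self_eq_zero.mp h0)
  set c : ℂ := dotProduct (star v) w / dotProduct (star v) v with hc
  refine ⟨c, ?_⟩
  set u : d → ℂ := w - c • v with hu
  have hvu : dotProduct (star v) u = 0 := by
    simp only [hu, dotProduct_sub, dotProduct_smul, hc, smul_eq_mul]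
    field_simp
    ring
  have hwu : dotProduct (star w) u = 0 := h u hvu
  have huu : dotProduct (star u) u = 0 := by
    have : star u = star w - star c • star v := by
      simp [hu, star_smul]
    rw [this, sub_dotProduct, smul_dotProduct, hwu, hvu]
    simp
  have : u = 0 := dotProduct_star_self_eq_zero.mp huu
  have := sub_eq_zero.mp this
  rw [this]
lemma vecMulVec_mulVec {d : Type} [Fintype d] [DecidableEq d] (v x : d → ℂ) :
    (Matrix.vecMulVec v (star v)) *ᵥ x = (dotProduct (star v) x) • v := by
  ext i
  simp only [Matrix.mulVec, Matrix.vecMulVec_apply, dotProduct, Pi.star_apply,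
    Pi.smul_apply, smul_eq_mul, Finset.sum_mul]
  exact Finset.sum_congr rfl fun q _ => by ring

lemma dot_star_comm {d : Type} [Fintype d] (x v : d → ℂ) :
    dotProduct (star x) v = star (dotProduct (star v) x) := by
  simp only [dotProduct, star_sum, star_mul', star_star, Pi.star_apply]
  exact Finset.sum_congr rfl fun i _ => mul_comm _ _

lemma vecMulVec_posSemidef {d : Type} [Fintype d] [DecidableEq d] (v : d → ℂ) :
    (Matrix.vecMulVec v (star v)).PosSemidef := by
  exact Matrix.posSemidef_vecMulVec_self_star v

lemma vecMulVec_trace {d : Type} [Fintype d] [DecidableEq d] (v : d → ℂ) :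
    (Matrix.vecMulVec v (star v)).trace = dotProduct (star v) v := by
  simp [Matrix.trace, Matrix.diag, Matrix.vecMulVec_apply, dotProduct, mul_comm]

lemma mul_vecMulVec_mul_conjTranspose {d : Type} [Fintype d] [DecidableEq d]
    (A : Matrix d d ℂ) (v : d → ℂ) :
    A * Matrix.vecMulVec v (star v) * Aᴴ = Matrix.vecMulVec (A *ᵥ v) (star (A *ᵥ v)) := by
  ext i j
  simp only [Matrix.mul_apply, Matrix.vecMulVec_apply, Matrix.conjTranspose_apply,
    Matrix.mulVec, dotProduct, Pi.star_apply, star_sum, star_mul',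
    Finset.sum_mul, Finset.mul_sum]
  exact Finset.sum_congr rfl fun p _ => Finset.sum_congr rfl fun q _ => by ring

lemma quadform_vecMulVec {d : Type} [Fintype d] [DecidableEq d] (v u : d → ℂ) :
    dotProduct (star u) ((Matrix.vecMulVec v (star v)) *ᵥ u)
      = Complex.normSq (dotProduct (star v) u) := by
  rw [_root_.vecMulVec_mulVec, dotProduct_smul, dot_star_comm u v, smul_eq_mul]
  exact Complex.mul_conj _

end

noncomputable section

lemma complex_real_mul_nonneg {r : ℝ} (hr : 0 ≤ r) {z : ℂ} (hz : 0 ≤ z) :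
    0 ≤ (r : ℂ) * z := by
  obtain ⟨h1, h2⟩ := Complex.nonneg_iff.mp hz
  have h2' : z.im = 0 := h2.symm
  refine Complex.nonneg_iff.mpr ⟨?_, ?_⟩
  · simp only [Complex.mul_re, Complex.ofReal_re, Complex.ofReal_im, h2']
    simpa using mul_nonneg hr h1
  · simp [Complex.mul_im, h2']

lemma psd_real_smul {d : Type} [Fintype d] [DecidableEq d] {A : Matrix d d ℂ}
    (hA : A.PosSemidef) {r : ℝ} (hr : 0 ≤ r) : ((r : ℂ) • A).PosSemidef := by
  exact hA.smul (Complex.zero_le_real.mpr hr)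

lemma dot_star_self_real {d : Type} [Fintype d] (v : d → ℂ) :
    dotProduct (star v) v = ((∑ i, Complex.normSq (v i) : ℝ) : ℂ) := by
  push_cast
  simp only [dotProduct, Pi.star_apply]
  exact Finset.sum_congr rfl fun i _ => by
    rw [Complex.star_def, ← Complex.normSq_eq_conj_mul_self]

lemma quad_sum {d : Type} [Fintype d] {m : ℕ} (M : Fin m → Matrix d d ℂ) (u : d → ℂ) :
    dotProduct (star u) ((∑ j, M j) *ᵥ u) = ∑ j, dotProduct (star u) ((M j) *ᵥ u) := by
  simp only [dotProduct, Matrix.mulVec, Matrix.sum_apply, Finset.sum_mul,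
    Finset.mul_sum, Finset.sum_apply]
  calc ∑ x, ∑ y, ∑ i, star u x * (M i x y * u y)
      = ∑ x, ∑ i, ∑ y, star u x * (M i x y * u y) :=
        Finset.sum_congr rfl fun x _ => Finset.sum_comm
    _ = ∑ i, ∑ x, ∑ y, star u x * (M i x y * u y) := Finset.sum_comm

/-- Any Kraus representation of the identity channel consists of scalar matrices. -/
lemma kraus_id_scalar {d : Type} [Fintype d] [DecidableEq d] [Nonempty d]
    {m : ℕ} (K : Fin m → Matrix d d ℂ)
    (hK : ∀ ρ : Matrix d d ℂ, IsDensity ρ → ∑ i, K i * ρ * (K i)ᴴ = ρ) :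
    ∀ i, ∃ c : ℂ, K i = c • (1 : Matrix d d ℂ) := by
  -- Step 1: the Kraus identity on all rank-one matrices
  have step1 : ∀ v : d → ℂ, v ≠ 0 →
      ∑ i, Matrix.vecMulVec (K i *ᵥ v) (star (K i *ᵥ v)) = Matrix.vecMulVec v (star v) := by
    intro v hv
    set c : ℝ := ∑ i, Complex.normSq (v i) with hcdef
    have hc0 : 0 < c := by
      rcases Function.ne_iff.mp hv with ⟨i, hi⟩
      refine Finset.sum_pos' (fun j _ => Complex.normSq_nonneg _) ⟨i, Finset.mem_univ i, ?_⟩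
      simpa [Complex.normSq_pos] using hi
    have hct : dotProduct (star v) v = (c : ℂ) := dot_star_self_real v
    have hden : IsDensity (((c⁻¹ : ℝ) : ℂ) • Matrix.vecMulVec v (star v)) := by
      constructor
      · exact psd_real_smul (vecMulVec_posSemidef v) (inv_nonneg.mpr hc0.le)
      · rw [Matrix.trace_smul, vecMulVec_trace, hct, smul_eq_mul]
        push_cast
        field_simp
    have := hK _ hden
    have hexp : ∀ i, K i * (((c⁻¹ : ℝ) : ℂ) • Matrix.vecMulVec v (star v)) * (K i)ᴴ
        = ((c⁻¹ : ℝ) : ℂ) • Matrix.vecMulVec (K i *ᵥ v) (star (K i *ᵥ v)) := by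
      intro i
      rw [Matrix.mul_smul, Matrix.smul_mul, mul_vecMulVec_mul_conjTranspose]
    rw [Finset.sum_congr rfl fun i _ => hexp i, ← Finset.smul_sum] at this
    have hcne : ((c⁻¹ : ℝ) : ℂ) ≠ 0 := by
      simp [ne_of_gt hc0]
    exact smul_right_injective _ hcne this
  -- Step 2: every nonzero vector is an eigenvector of each K i
  have step2 : ∀ v : d → ℂ, v ≠ 0 → ∀ i, ∃ c : ℂ, K i *ᵥ v = c • v := by
    intro v hv i
    refine span_of_orth hv ?_
    intro u hu
    have h1 := congrArg (fun M => dotProduct (star u) (M *ᵥ u)) (step1 v hv)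
    simp only [quad_sum] at h1
    rw [Finset.sum_congr rfl (fun j _ => quadform_vecMulVec (K j *ᵥ v) u),
      quadform_vecMulVec v u, hu] at h1
    simp only [map_zero, Complex.normSq_zero, Complex.ofReal_zero] at h1
    have h2 : ∑ j, Complex.normSq (dotProduct (star (K j *ᵥ v)) u) = 0 := by
      have := congrArg Complex.re h1
      simpa using this
    have h3 := (Finset.sum_eq_zero_iff_of_nonneg
      (fun j _ => Complex.normSq_nonneg _)).mp h2 i (Finset.mem_univ i)
    exact Complex.normSq_eq_zero.mp h3
  -- Step 3: conclude each K i is scalar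
  intro i
  have he : ∀ k : d, (Pi.single k 1 : d → ℂ) ≠ 0 := by
    intro k h
    have := congrFun h k
    simp at this
  choose ev hev using fun k => step2 (Pi.single k 1) (he k) i
  have heq : ∀ k l : d, ev k = ev l := by
    intro k l
    by_cases hkl : k = l
    · rw [hkl]
    · have hvne : (Pi.single k 1 + Pi.single l 1 : d → ℂ) ≠ 0 := by
        intro h
        have := congrFun h k
        simp [Pi.single_apply, hkl] at this
      obtain ⟨c, hc⟩ := step2 _ hvne i
      rw [Matrix.mulVec_add, hev k, hev l] at hc
      have hk := congrFun hc k
      have hl := congrFun hc l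
      simp [Pi.single_apply, hkl, Ne.symm hkl] at hk hl
      rw [hk, hl]
  obtain ⟨k0⟩ := ‹Nonempty d›
  refine ⟨ev k0, ?_⟩
  ext a b
  have := congrFun (hev b) a
  simp only [Matrix.mulVec_single_one, Matrix.col_apply] at this
  rw [this, heq b k0]
  by_cases hab : a = b <;> simp [Matrix.one_apply, Pi.single_apply, hab]

end

noncomputable section

lemma mul_smul_one_mul_conjT {d : Type} [Fintype d] [DecidableEq d]
    (G : Matrix d d ℂ) (k : ℂ) :
    G * (k • (1 : Matrix d d ℂ)) * Gᴴ = k • (G * Gᴴ) := by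
  rw [Matrix.mul_smul, Matrix.mul_one, Matrix.smul_mul]

lemma trace_mul_conjT_self {d : Type} [Fintype d] [DecidableEq d] (G : Matrix d d ℂ) :
    (G * Gᴴ).trace = ((∑ j, ∑ k, Complex.normSq (G j k) : ℝ) : ℂ) := by
  push_cast
  simp only [Matrix.trace, Matrix.diag, Matrix.mul_apply, Matrix.conjTranspose_apply]
  exact Finset.sum_congr rfl fun j _ => Finset.sum_congr rfl fun k _ => by
    rw [Complex.star_def, mul_comm, ← Complex.normSq_eq_conj_mul_self]

lemma normSq_sum_pos {d : Type} [Fintype d] [DecidableEq d] {G : Matrix d d ℂ}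
    (hG : G ≠ 0) : 0 < ∑ j, ∑ k, Complex.normSq (G j k) := by
  have : ∃ j k, G j k ≠ 0 := by
    by_contra h
    push_neg at h
    exact hG (Matrix.ext fun j k => h j k)
  obtain ⟨j, k, hjk⟩ := this
  refine Finset.sum_pos' (fun a _ => Finset.sum_nonneg fun b _ => Complex.normSq_nonneg _)
    ⟨j, Finset.mem_univ j, ?_⟩
  refine Finset.sum_pos' (fun b _ => Complex.normSq_nonneg _) ⟨k, Finset.mem_univ k, ?_⟩
  simpa [Complex.normSq_pos] using hjk

lemma one_density {k : ℕ} (hk : 0 < k) :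
    IsDensity (((k : ℂ))⁻¹ • (1 : Matrix (Fin k) (Fin k) ℂ)) := by
  have hcast : ((k : ℂ))⁻¹ = (((k : ℝ)⁻¹ : ℝ) : ℂ) := by push_cast; ring
  constructor
  · rw [hcast]
    exact psd_real_smul Matrix.PosSemidef.one (by positivity)
  · rw [Matrix.trace_smul, Matrix.trace_one, smul_eq_mul]
    field_simp
    simp

lemma smul_one_conj_mul {d : Type} [Fintype d] [DecidableEq d] (z : ℂ) (ρ : Matrix d d ℂ) :
    (z • (1 : Matrix d d ℂ)) * ρ * (z • (1 : Matrix d d ℂ))ᴴ = (z * star z) • ρ := by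
  rw [Matrix.conjTranspose_smul, Matrix.conjTranspose_one, Matrix.smul_mul, Matrix.one_mul,
    Matrix.mul_smul, Matrix.mul_one, smul_smul, mul_comm]

/-- Key structural lemma: a separable cylindrical extension acts on product states
as `E ⊗ id`. -/
lemma sep_cylExtLeft_prod {n n' : ℕ} (hn : 0 < n) (hn' : 0 < n')
    {E : Matrix (Fin n) (Fin n) ℂ → Matrix (Fin n) (Fin n) ℂ}
    {F : Matrix (Fin n × Fin n') (Fin n × Fin n') ℂ →
         Matrix (Fin n × Fin n') (Fin n × Fin n') ℂ}
    (hsep : CommSeparableOp F) (hcyl : CylExtLeft E F) :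
    ∀ ρ ρ', IsDensity ρ → IsDensity ρ' → F (ρ ⊗ₖ ρ') = (E ρ) ⊗ₖ ρ' := by
  obtain ⟨m, G, G', -, -, hF⟩ := hsep
  -- the weights
  set c : Fin m → ℝ := fun i => (n : ℝ)⁻¹ * ∑ j, ∑ k, Complex.normSq (G i j k) with hc
  have hc0 : ∀ i, 0 ≤ c i := fun i => by
    have : (0:ℝ) ≤ ∑ j, ∑ k, Complex.normSq (G i j k) :=
      Finset.sum_nonneg fun a _ => Finset.sum_nonneg fun b _ => Complex.normSq_nonneg _
    positivity
  have htr : ∀ i, (G i * (((n : ℂ))⁻¹ • (1 : Matrix (Fin n) (Fin n) ℂ)) * (G i)ᴴ).trace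
      = ((c i : ℝ) : ℂ) := by
    intro i
    rw [mul_smul_one_mul_conjT, Matrix.trace_smul, trace_mul_conjT_self, smul_eq_mul, hc]
    push_cast
    ring
  -- identity channel condition on the second factor
  have hid : ∀ ρ' : Matrix (Fin n') (Fin n') ℂ, IsDensity ρ' →
      ∑ i, ((c i : ℝ) : ℂ) • (G' i * ρ' * (G' i)ᴴ) = ρ' := by
    intro ρ' hρ'
    have h2 : ptrace1 (F ((((n : ℂ))⁻¹ • (1 : Matrix (Fin n) (Fin n) ℂ)) ⊗ₖ ρ'))
        = ∑ i, ((c i : ℝ) : ℂ) • (G' i * ρ' * (G' i)ᴴ) := by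
      rw [hF, ptrace1_sum]
      refine Finset.sum_congr rfl fun i _ => ?_
      rw [kron_mul_kron_mul, ptrace1_kron, htr]
    rw [← h2]
    exact hcyl.2 ρ' hρ'
  -- Kraus operators of the identity channel
  set K : Fin m → Matrix (Fin n') (Fin n') ℂ :=
    fun i => ((Real.sqrt (c i) : ℝ) : ℂ) • G' i with hKdef
  have hKid : ∀ ρ' : Matrix (Fin n') (Fin n') ℂ, IsDensity ρ' →
      ∑ i, K i * ρ' * (K i)ᴴ = ρ' := by
    intro ρ' hρ'
    have hterm : ∀ i, K i * ρ' * (K i)ᴴ = ((c i : ℝ) : ℂ) • (G' i * ρ' * (G' i)ᴴ) := by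
      intro i
      show ((Real.sqrt (c i) : ℝ) : ℂ) • G' i * ρ' * (((Real.sqrt (c i) : ℝ) : ℂ) • G' i)ᴴ = _
      simp only [Matrix.smul_mul, Matrix.mul_smul, Matrix.conjTranspose_smul, smul_smul]
      congr 1
      rw [Complex.star_def, Complex.conj_ofReal, ← Complex.ofReal_mul,
        Real.mul_self_sqrt (hc0 i)]
    rw [Finset.sum_congr rfl fun i _ => hterm i]
    exact hid ρ' hρ'
  have : Nonempty (Fin n') := ⟨⟨0, hn'⟩⟩
  choose μ hμ using kraus_id_scalar K hKid
  -- main computation, for a fixed first factor ρ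
  intro ρ ρ' hρ hρ'
  set z : Fin m → ℂ := fun i => ((Real.sqrt (c i) : ℝ) : ℂ)⁻¹ * μ i with hz
  set w : Fin m → ℂ := fun i => if G i = 0 then 0 else z i * star (z i) with hw
  set B : Matrix (Fin n) (Fin n) ℂ := ∑ i, w i • (G i * ρ * (G i)ᴴ) with hB
  have hGscal : ∀ i, G i ≠ 0 → G' i = z i • (1 : Matrix (Fin n') (Fin n') ℂ) := by
    intro i hGi
    have hci : 0 < c i := by
      rw [hc]
      have := normSq_sum_pos hGi
      positivity
    have hs : ((Real.sqrt (c i) : ℝ) : ℂ) ≠ 0 := by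
      simp [Real.sqrt_eq_zero', not_le, hci, ne_of_gt hci]
    have := hμ i
    rw [hKdef] at this
    have := congrArg (fun M => (((Real.sqrt (c i) : ℝ) : ℂ))⁻¹ • M) this
    simp only [smul_smul, inv_mul_cancel₀ hs, one_smul] at this
    rw [this]
  have hprod : ∀ σ' : Matrix (Fin n') (Fin n') ℂ, IsDensity σ' →
      F (ρ ⊗ₖ σ') = B ⊗ₖ σ' := by
    intro σ' hσ'
    rw [hF, hB, sum_kron]
    refine Finset.sum_congr rfl fun i _ => ?_
    rw [kron_mul_kron_mul]
    by_cases hGi : G i = 0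
    · simp [hw, hGi, Matrix.zero_kronecker, Matrix.zero_mul, Matrix.mul_zero]
    · rw [hGscal i hGi, smul_one_conj_mul, Matrix.kronecker_smul]
      have hwi : w i = z i * star (z i) := by rw [hw]; exact if_neg hGi
      rw [hwi, ← Matrix.smul_kronecker]
  have hBE : B = E ρ := by
    have h1 := hcyl.1 ρ hρ
    rw [hprod _ (one_density hn'), ptrace2_kron, Matrix.trace_smul, Matrix.trace_one,
      smul_eq_mul] at h1
    simp only [Fintype.card_fin] at h1
    have hne : (n' : ℂ) ≠ 0 := Nat.cast_ne_zero.mpr hn'.ne'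
    rw [inv_mul_cancel₀ hne, one_smul] at h1
    exact h1
  rw [hprod ρ' hρ', hBE]

end

noncomputable section

/-- Mirror of `sep_cylExtLeft_prod`: a separable cylindrical extension of an operation
on the second factor acts on product states as `id ⊗ E'`. -/
lemma sep_cylExtRight_prod {n n' : ℕ} (hn : 0 < n) (hn' : 0 < n')
    {E' : Matrix (Fin n') (Fin n') ℂ → Matrix (Fin n') (Fin n') ℂ}
    {F : Matrix (Fin n × Fin n') (Fin n × Fin n') ℂ →
         Matrix (Fin n × Fin n') (Fin n × Fin n') ℂ}
    (hsep : CommSeparableOp F) (hcyl : CylExtRight E' F) :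
    ∀ ρ ρ', IsDensity ρ → IsDensity ρ' → F (ρ ⊗ₖ ρ') = ρ ⊗ₖ (E' ρ') := by
  obtain ⟨m, G, G', -, -, hF⟩ := hsep
  set c : Fin m → ℝ := fun i => (n' : ℝ)⁻¹ * ∑ j, ∑ k, Complex.normSq (G' i j k) with hc
  have hc0 : ∀ i, 0 ≤ c i := fun i => by
    have : (0:ℝ) ≤ ∑ j, ∑ k, Complex.normSq (G' i j k) :=
      Finset.sum_nonneg fun a _ => Finset.sum_nonneg fun b _ => Complex.normSq_nonneg _
    positivity
  have htr : ∀ i, (G' i * (((n' : ℂ))⁻¹ • (1 : Matrix (Fin n') (Fin n') ℂ)) * (G' i)ᴴ).trace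
      = ((c i : ℝ) : ℂ) := by
    intro i
    rw [mul_smul_one_mul_conjT, Matrix.trace_smul, trace_mul_conjT_self, smul_eq_mul, hc]
    push_cast
    ring
  have hid : ∀ ρ : Matrix (Fin n) (Fin n) ℂ, IsDensity ρ →
      ∑ i, ((c i : ℝ) : ℂ) • (G i * ρ * (G i)ᴴ) = ρ := by
    intro ρ hρ
    have h2 : ptrace2 (F (ρ ⊗ₖ (((n' : ℂ))⁻¹ • (1 : Matrix (Fin n') (Fin n') ℂ))))
        = ∑ i, ((c i : ℝ) : ℂ) • (G i * ρ * (G i)ᴴ) := by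
      rw [hF, ptrace2_sum]
      refine Finset.sum_congr rfl fun i _ => ?_
      rw [kron_mul_kron_mul, ptrace2_kron, htr]
    rw [← h2]
    exact hcyl.2 ρ hρ
  set K : Fin m → Matrix (Fin n) (Fin n) ℂ :=
    fun i => ((Real.sqrt (c i) : ℝ) : ℂ) • G i with hKdef
  have hKid : ∀ ρ : Matrix (Fin n) (Fin n) ℂ, IsDensity ρ →
      ∑ i, K i * ρ * (K i)ᴴ = ρ := by
    intro ρ hρ
    have hterm : ∀ i, K i * ρ * (K i)ᴴ = ((c i : ℝ) : ℂ) • (G i * ρ * (G i)ᴴ) := by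
      intro i
      show ((Real.sqrt (c i) : ℝ) : ℂ) • G i * ρ * (((Real.sqrt (c i) : ℝ) : ℂ) • G i)ᴴ = _
      simp only [Matrix.smul_mul, Matrix.mul_smul, Matrix.conjTranspose_smul, smul_smul]
      congr 1
      rw [Complex.star_def, Complex.conj_ofReal, ← Complex.ofReal_mul,
        Real.mul_self_sqrt (hc0 i)]
    rw [Finset.sum_congr rfl fun i _ => hterm i]
    exact hid ρ hρ
  have : Nonempty (Fin n) := ⟨⟨0, hn⟩⟩
  choose μ hμ using kraus_id_scalar K hKid
  intro ρ ρ' hρ hρ'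
  set z : Fin m → ℂ := fun i => ((Real.sqrt (c i) : ℝ) : ℂ)⁻¹ * μ i with hz
  set w : Fin m → ℂ := fun i => if G' i = 0 then 0 else z i * star (z i) with hw
  set B : Matrix (Fin n') (Fin n') ℂ := ∑ i, w i • (G' i * ρ' * (G' i)ᴴ) with hB
  have hGscal : ∀ i, G' i ≠ 0 → G i = z i • (1 : Matrix (Fin n) (Fin n) ℂ) := by
    intro i hGi
    have hci : 0 < c i := by
      rw [hc]
      have := normSq_sum_pos hGi
      positivity
    have hs : ((Real.sqrt (c i) : ℝ) : ℂ) ≠ 0 := by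
      simp [Real.sqrt_eq_zero', not_le, hci, ne_of_gt hci]
    have := hμ i
    rw [hKdef] at this
    have := congrArg (fun M => (((Real.sqrt (c i) : ℝ) : ℂ))⁻¹ • M) this
    simp only [smul_smul, inv_mul_cancel₀ hs, one_smul] at this
    rw [this]
  have hprod : ∀ σ : Matrix (Fin n) (Fin n) ℂ, IsDensity σ →
      F (σ ⊗ₖ ρ') = σ ⊗ₖ B := by
    intro σ hσ
    rw [hF, hB, kron_sum]
    refine Finset.sum_congr rfl fun i _ => ?_
    rw [kron_mul_kron_mul]
    by_cases hGi : G' i = 0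
    · simp [hw, hGi, Matrix.kronecker_zero, Matrix.zero_mul, Matrix.mul_zero]
    · rw [hGscal i hGi, smul_one_conj_mul, Matrix.smul_kronecker]
      have hwi : w i = z i * star (z i) := by rw [hw]; exact if_neg hGi
      rw [hwi, ← Matrix.kronecker_smul]
  have hBE : B = E' ρ' := by
    have h1 := hcyl.1 ρ' hρ'
    rw [hprod _ (one_density hn), ptrace1_kron, Matrix.trace_smul, Matrix.trace_one,
      smul_eq_mul] at h1
    simp only [Fintype.card_fin] at h1
    have hne : (n : ℂ) ≠ 0 := Nat.cast_ne_zero.mpr hn.ne'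
    rw [inv_mul_cancel₀ hne, one_smul] at h1
    exact h1
  rw [hprod ρ hρ, hBE]

end

noncomputable section

/-- Keep exactly the elements satisfying `P`. -/
def keep {Agent Cmd : Type} (P : Agent × Cmd → Prop) :
    List (Agent × Cmd) → List (Agent × Cmd)
  | [] => []
  | p :: rest => if P p then p :: keep P rest else keep P rest

variable {Agent Cmd : Type}

lemma keep_cons_pos {P : Agent × Cmd → Prop} {p : Agent × Cmd} (α : List (Agent × Cmd))
    (h : P p) : keep P (p :: α) = p :: keep P α := by simp [keep, h]

lemma keep_cons_neg {P : Agent × Cmd → Prop} {p : Agent × Cmd} (α : List (Agent × Cmd))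
    (h : ¬ P p) : keep P (p :: α) = keep P α := by simp [keep, h]

lemma keep_congr {P Q : Agent × Cmd → Prop} (h : ∀ p, P p ↔ Q p) :
    ∀ α, keep P α = keep Q α
  | [] => rfl
  | p :: rest => by
    by_cases hp : P p
    · rw [keep_cons_pos _ hp, keep_cons_pos _ ((h p).mp hp), keep_congr h rest]
    · rw [keep_cons_neg _ hp, keep_cons_neg _ (fun hq => hp ((h p).mpr hq)), keep_congr h rest]

lemma purge_eq_keep (G : Set Agent) :
    ∀ α : List (Agent × Cmd), purge G Set.univ α = keep (fun p => p.1 ∉ G) α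
  | [] => rfl
  | p :: rest => by
    by_cases hp : p.1 ∈ G
    · have h1 : purge G Set.univ (p :: rest) = purge G Set.univ rest := by
        rw [purge, if_pos ⟨hp, Set.mem_univ p.2⟩]
      rw [h1, keep_cons_neg _ (by simpa using hp), purge_eq_keep G rest]
    · have h1 : purge G Set.univ (p :: rest) = p :: purge G Set.univ rest := by
        rw [purge, if_neg (fun h => hp h.1)]
      rw [h1, keep_cons_pos _ (by simpa using hp), purge_eq_keep G rest]

lemma keep_keep (P Q : Agent × Cmd → Prop) :
    ∀ α : List (Agent × Cmd), keep P (keep Q α) = keep (fun p => P p ∧ Q p) α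
  | [] => rfl
  | p :: rest => by
    by_cases hq : Q p
    · by_cases hp : P p
      · rw [keep_cons_pos _ hq, keep_cons_pos _ hp, keep_cons_pos _ ⟨hp, hq⟩,
          keep_keep P Q rest]
      · rw [keep_cons_pos _ hq, keep_cons_neg _ hp, keep_cons_neg _ (fun h => hp h.1),
          keep_keep P Q rest]
    · rw [keep_cons_neg _ hq, keep_cons_neg _ (fun h => hq h.2), keep_keep P Q rest]

lemma mem_keep {P : Agent × Cmd → Prop} :
    ∀ {α : List (Agent × Cmd)} {p : Agent × Cmd}, p ∈ keep P α → P p ∧ p ∈ α := by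
  intro α
  induction α with
  | nil => intro p h; simp [keep] at h
  | cons q rest ih =>
    intro p h
    by_cases hq : P q
    · rw [keep_cons_pos _ hq] at h
      rcases List.mem_cons.mp h with h1 | h2
      · exact ⟨h1 ▸ hq, by simp [h1]⟩
      · exact ⟨(ih h2).1, List.mem_cons_of_mem _ (ih h2).2⟩
    · rw [keep_cons_neg _ hq] at h
      exact ⟨(ih h).1, List.mem_cons_of_mem _ (ih h).2⟩

lemma run_cons {d : Type} (S : QSystem Agent Cmd d) (p : Agent × Cmd)
    (α : List (Agent × Cmd)) (ρ : Matrix d d ℂ) :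
    S.run (p :: α) ρ = S.run α (S.Ecmd p.1 p.2 ρ) := rfl

lemma valid_cons {d : Type} {S : QSystem Agent Cmd d} {p : Agent × Cmd}
    {α : List (Agent × Cmd)} (h : S.Valid (p :: α)) : S.Valid α :=
  fun q hq => h q (List.mem_cons_of_mem _ hq)

lemma run_density {d : Type} [Fintype d] [DecidableEq d] {S : QSystem Agent Cmd d}
    (hwf : ∀ a ∈ S.A, ∀ c ∈ S.C, IsSuperOp (S.Ecmd a c)) :
    ∀ α, S.Valid α → ∀ ρ : Matrix d d ℂ, IsDensity ρ → IsDensity (S.run α ρ)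
  | [], _, ρ, hρ => hρ
  | p :: rest, hv, ρ, hρ => by
    rw [run_cons]
    obtain ⟨ha, hc⟩ := hv p (List.mem_cons_self)
    obtain ⟨-, hpos, htr⟩ := hwf p.1 ha p.2 hc
    exact run_density hwf rest (valid_cons hv) _ ⟨hpos ρ hρ.1, (htr ρ).trans hρ.2⟩

lemma run_sum_smul {d : Type} [Fintype d] [DecidableEq d] {S : QSystem Agent Cmd d} :
    ∀ (α : List (Agent × Cmd)), (∀ p ∈ α, IsLinearMap ℂ (S.Ecmd p.1 p.2)) →
    ∀ {m : ℕ} (q : Fin m → ℂ) (σ : Fin m → Matrix d d ℂ),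
      S.run α (∑ i, q i • σ i) = ∑ i, q i • S.run α (σ i)
  | [], _, m, q, σ => rfl
  | p :: rest, hlin, m, q, σ => by
    rw [run_cons]
    have hp := hlin p (List.mem_cons_self)
    let f : Matrix d d ℂ →ₗ[ℂ] Matrix d d ℂ := IsLinearMap.mk' _ hp
    have h1 : S.Ecmd p.1 p.2 (∑ i, q i • σ i) = ∑ i, q i • S.Ecmd p.1 p.2 (σ i) := by
      show f (∑ i, q i • σ i) = ∑ i, q i • f (σ i)
      rw [map_sum]
      exact Finset.sum_congr rfl fun i _ => f.map_smul _ _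
    rw [h1, run_sum_smul rest (fun q hq => hlin q (List.mem_cons_of_mem _ hq)) q
      (fun i => S.Ecmd p.1 p.2 (σ i))]
    rfl

end

noncomputable section

/-- On product states, a generalised composition evolves the two factors independently. -/
lemma prod_run {Agent Cmd : Type} {n n' : ℕ} (hn : 0 < n) (hn' : 0 < n')
    {S : QSystem Agent Cmd (Fin n)} {S' : QSystem Agent Cmd (Fin n')}
    {T : QSystem Agent Cmd (Fin n × Fin n')}
    (hS : S.WellFormed) (hS' : S'.WellFormed)
    (hC : S.C ∩ S'.C = ∅) (hgen : IsGenComp S S' T)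
    (hops : ∀ a ∈ T.A, ∀ c ∈ T.C, CommSeparableOp (T.Ecmd a c))
    (α : List (Agent × Cmd)) : T.Valid α →
    ∀ (ρ : Matrix (Fin n) (Fin n) ℂ) (ρ' : Matrix (Fin n') (Fin n') ℂ),
      IsDensity ρ → IsDensity ρ' →
      T.run α (ρ ⊗ₖ ρ') = (S.run (keep (fun p => p.1 ∈ S.A ∧ p.2 ∈ S.C) α) ρ)
        ⊗ₖ (S'.run (keep (fun p => p.1 ∈ S'.A ∧ p.2 ∈ S'.C) α) ρ') := by
  induction α with
  | nil => intro _ ρ ρ' _ _; rfl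
  | cons p rest ih =>
    intro hv ρ ρ' hρ hρ'
    obtain ⟨hTA, hTC, -, -, -, hmix, hcylL, hcylR, -⟩ := hgen
    obtain ⟨hpa, hpc⟩ := hv p (List.mem_cons_self)
    have hpa' : p.1 ∈ S.A ∪ S'.A := hTA ▸ hpa
    have hpc' : p.2 ∈ S.C ∪ S'.C := hTC ▸ hpc
    have hvr := valid_cons hv
    rw [run_cons]
    by_cases hcS : p.2 ∈ S.C
    · have hcS' : p.2 ∉ S'.C := fun h =>
        Set.eq_empty_iff_forall_notMem.mp hC p.2 ⟨hcS, h⟩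
      by_cases haS : p.1 ∈ S.A
      · have hstep : T.Ecmd p.1 p.2 (ρ ⊗ₖ ρ') = (S.Ecmd p.1 p.2 ρ) ⊗ₖ ρ' :=
          sep_cylExtLeft_prod hn hn' (hops p.1 hpa p.2 hpc)
            (hcylL p.1 haS p.2 hcS) ρ ρ' hρ hρ'
        obtain ⟨-, hpos, htr⟩ := hS.2.1 p.1 haS p.2 hcS
        have hρ2 : IsDensity (S.Ecmd p.1 p.2 ρ) := ⟨hpos ρ hρ.1, (htr ρ).trans hρ.2⟩
        rw [hstep, ih hvr _ _ hρ2 hρ', keep_cons_pos rest ⟨haS, hcS⟩,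
          keep_cons_neg rest (fun h => hcS' h.2)]
        rfl
      · have haS' : p.1 ∈ S'.A := hpa'.resolve_left haS
        have hid : T.Ecmd p.1 p.2 = id := hmix p.1 p.2 (Or.inr ⟨⟨haS', haS⟩, hcS⟩)
        have hstep : T.Ecmd p.1 p.2 (ρ ⊗ₖ ρ') = ρ ⊗ₖ ρ' := by rw [hid]; rfl
        rw [hstep, ih hvr _ _ hρ hρ', keep_cons_neg rest (fun h => haS h.1),
          keep_cons_neg rest (fun h => hcS' h.2)]
    · have hcS' : p.2 ∈ S'.C := hpc'.resolve_left hcS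
      by_cases haS' : p.1 ∈ S'.A
      · have hstep : T.Ecmd p.1 p.2 (ρ ⊗ₖ ρ') = ρ ⊗ₖ (S'.Ecmd p.1 p.2 ρ') :=
          sep_cylExtRight_prod hn hn' (hops p.1 hpa p.2 hpc)
            (hcylR p.1 haS' p.2 hcS') ρ ρ' hρ hρ'
        obtain ⟨-, hpos, htr⟩ := hS'.2.1 p.1 haS' p.2 hcS'
        have hρ2 : IsDensity (S'.Ecmd p.1 p.2 ρ') := ⟨hpos ρ' hρ'.1, (htr ρ').trans hρ'.2⟩
        rw [hstep, ih hvr _ _ hρ hρ2, keep_cons_neg rest (fun h => hcS h.2),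
          keep_cons_pos rest ⟨haS', hcS'⟩]
        rfl
      · have haS : p.1 ∈ S.A := hpa'.resolve_right haS'
        have hid : T.Ecmd p.1 p.2 = id := hmix p.1 p.2 (Or.inl ⟨⟨haS, haS'⟩, hcS'⟩)
        have hstep : T.Ecmd p.1 p.2 (ρ ⊗ₖ ρ') = ρ ⊗ₖ ρ' := by rw [hid]; rfl
        rw [hstep, ih hvr _ _ hρ hρ', keep_cons_neg rest (fun h => hcS h.2),
          keep_cons_neg rest (fun h => haS' h.1)]

end

noncomputable section

lemma dE_nonneg {d : Type} [Fintype d] (P : PMeas d) (ρ σ : Matrix d d ℂ) :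
    0 ≤ dE P ρ σ := by
  unfold dE
  positivity

lemma dE_le_one {d : Type} [Fintype d] [DecidableEq d] {P : PMeas d} (hP : P.IsPOVM)
    {ρ σ : Matrix d d ℂ} (hρ : IsDensity ρ) (hσ : IsDensity σ) : dE P ρ σ ≤ 1 := by
  obtain ⟨hpos, hsum⟩ := hP
  have key : ∀ τ : Matrix d d ℂ, IsDensity τ → ∑ i, ‖(P.E i * τ).trace‖
      = 1 := by
    intro τ hτ
    have h1 : ∀ i, (‖(P.E i * τ).trace‖ : ℝ) = ((P.E i * τ).trace).re :=
      fun i => cabs_of_nonneg (psd_trace_mul_nonneg (hpos i) hτ.1)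
    rw [Finset.sum_congr rfl fun i _ => h1 i, ← Complex.re_sum]
    have h2 : ∑ i, (P.E i * τ).trace = τ.trace := by
      rw [← Matrix.trace_sum, ← Finset.sum_mul, hsum, Matrix.one_mul]
    rw [h2, hτ.2]
    simp
  have hbound : ∑ i, ‖(P.E i * ρ).trace - (P.E i * σ).trace‖ ≤ 2 := by
    calc ∑ i, ‖(P.E i * ρ).trace - (P.E i * σ).trace‖
        ≤ ∑ i, (‖(P.E i * ρ).trace‖ + ‖(P.E i * σ).trace‖) :=
          Finset.sum_le_sum fun i _ => norm_sub_le _ _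
      _ = 2 := by rw [Finset.sum_add_distrib, key ρ hρ, key σ hσ]; norm_num
  unfold dE
  linarith

lemma dM_nonneg {d : Type} [Fintype d] (M : Set (PMeas d)) (ρ σ : Matrix d d ℂ) :
    0 ≤ dM M ρ σ := by
  refine Real.sSup_nonneg fun x hx => ?_
  obtain ⟨P, -, rfl⟩ := hx
  exact dE_nonneg P ρ σ

lemma dM_le_one {d : Type} [Fintype d] [DecidableEq d] {M : Set (PMeas d)}
    (hM : ∀ P ∈ M, P.IsPOVM) {ρ σ : Matrix d d ℂ}
    (hρ : IsDensity ρ) (hσ : IsDensity σ) : dM M ρ σ ≤ 1 := by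
  refine Real.sSup_le (fun x hx => ?_) zero_le_one
  obtain ⟨P, hP, rfl⟩ := hx
  exact dE_le_one (hM P hP) hρ hσ

lemma dE_le_dM {d : Type} [Fintype d] [DecidableEq d] {M : Set (PMeas d)}
    (hM : ∀ P ∈ M, P.IsPOVM) {ρ σ : Matrix d d ℂ}
    (hρ : IsDensity ρ) (hσ : IsDensity σ) {P : PMeas d} (hP : P ∈ M) :
    dE P ρ σ ≤ dM M ρ σ := by
  refine le_csSup ⟨1, fun x hx => ?_⟩ ⟨P, hP, rfl⟩
  obtain ⟨Q, hQ, rfl⟩ := hx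
  exact dE_le_one (hM Q hQ) hρ hσ

lemma valid_purge {Agent Cmd d : Type} {S : QSystem Agent Cmd d}
    {α : List (Agent × Cmd)} (hα : S.Valid α) (G : Set Agent) :
    S.Valid (purge G Set.univ α) := by
  intro q hq
  rw [purge_eq_keep] at hq
  exact hα q (mem_keep hq).2

lemma Kdeg_nonneg {Agent Cmd d : Type} [Fintype d] (S : QSystem Agent Cmd d)
    (pol : Agent → Agent → Prop) : 0 ≤ Kdeg S pol := by
  refine Real.sSup_nonneg fun x hx => ?_
  obtain ⟨a, -, α, -, rfl⟩ := hx
  exact dM_nonneg _ _ _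

lemma Kdeg_le_one {Agent Cmd d : Type} [Fintype d] [DecidableEq d]
    {S : QSystem Agent Cmd d} (hd : IsDensity S.ρ0)
    (hsup : ∀ a ∈ S.A, ∀ c ∈ S.C, IsSuperOp (S.Ecmd a c))
    (hpovm : ∀ a ∈ S.A, ∀ P ∈ S.M a, P.IsPOVM)
    (pol : Agent → Agent → Prop) : Kdeg S pol ≤ 1 := by
  refine Real.sSup_le (fun x hx => ?_) zero_le_one
  obtain ⟨a, ha, α, hα, rfl⟩ := hx
  exact dM_le_one (hpovm a ha) (run_density hsup α hα _ hd)
    (run_density hsup _ (valid_purge hα _) _ hd)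

lemma SK_nonneg {Agent Cmd d : Type} [Fintype d] [DecidableEq d]
    (S : QSystem Agent Cmd d) (pol : Agent → Agent → Prop) : 0 ≤ SK S pol := by
  refine Real.sSup_nonneg fun x hx => ?_
  obtain ⟨m, p, ρ, hp0, -, -, -, rfl⟩ := hx
  exact Finset.sum_nonneg fun i _ => mul_nonneg (hp0 i) (Kdeg_nonneg _ _)

lemma le_SK {Agent Cmd d : Type} [Fintype d] [DecidableEq d]
    {S : QSystem Agent Cmd d} (hwf : S.WellFormed) (pol : Agent → Agent → Prop)
    {m : ℕ} {p : Fin m → ℝ} {ρ : Fin m → Matrix d d ℂ}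
    (hp0 : ∀ i, 0 ≤ p i) (hp1 : ∑ i, p i = 1) (hρd : ∀ i, IsDensity (ρ i))
    (hdec : S.ρ0 = ∑ i, (p i : ℂ) • ρ i) :
    ∑ i, p i * Kdeg (S.withInit (ρ i)) pol ≤ SK S pol := by
  refine le_csSup ⟨1, fun x hx => ?_⟩ ⟨m, p, ρ, hp0, hp1, hρd, hdec, rfl⟩
  obtain ⟨m', p', ρ', hp0', hp1', hρd', -, rfl⟩ := hx
  calc ∑ i, p' i * Kdeg (S.withInit (ρ' i)) pol
      ≤ ∑ i, p' i * 1 := Finset.sum_le_sum fun i _ => by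
        have h1 : Kdeg (S.withInit (ρ' i)) pol ≤ 1 :=
          Kdeg_le_one (S := S.withInit (ρ' i)) (hρd' i) hwf.2.1 hwf.2.2 pol
        exact mul_le_mul_of_nonneg_left h1 (hp0' i)
    _ = 1 := by simp [hp1']

lemma ptrace2_smul {d1 d2 : Type} [Fintype d2] (c : ℂ)
    (σ : Matrix (d1 × d2) (d1 × d2) ℂ) : ptrace2 (c • σ) = c • ptrace2 σ := by
  ext i j
  simp [ptrace2, Finset.mul_sum]

lemma ptrace1_smul {d1 d2 : Type} [Fintype d1] (c : ℂ)
    (σ : Matrix (d1 × d2) (d1 × d2) ℂ) : ptrace1 (c • σ) = c • ptrace1 σ := by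
  ext i j
  simp [ptrace1, Finset.mul_sum]

lemma trace_liftL_mix {n n' : ℕ} (E : Matrix (Fin n) (Fin n) ℂ) {m : ℕ} (q : Fin m → ℂ)
    (A : Fin m → Matrix (Fin n) (Fin n) ℂ) (B : Fin m → Matrix (Fin n') (Fin n') ℂ)
    (hB : ∀ i, (B i).trace = 1) :
    ((E ⊗ₖ (1 : Matrix (Fin n') (Fin n') ℂ)) * (∑ i, q i • (A i ⊗ₖ B i))).trace
      = ∑ i, q i * (E * A i).trace := by
  rw [Matrix.mul_sum, Matrix.trace_sum]
  refine Finset.sum_congr rfl fun i _ => ?_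
  rw [Matrix.mul_smul, Matrix.trace_smul, ← Matrix.mul_kronecker_mul, Matrix.trace_kronecker,
    Matrix.one_mul, hB i, mul_one, smul_eq_mul]

lemma trace_liftR_mix {n n' : ℕ} (E : Matrix (Fin n') (Fin n') ℂ) {m : ℕ} (q : Fin m → ℂ)
    (A : Fin m → Matrix (Fin n) (Fin n) ℂ) (B : Fin m → Matrix (Fin n') (Fin n') ℂ)
    (hA : ∀ i, (A i).trace = 1) :
    (((1 : Matrix (Fin n) (Fin n) ℂ) ⊗ₖ E) * (∑ i, q i • (A i ⊗ₖ B i))).trace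
      = ∑ i, q i * (E * B i).trace := by
  rw [Matrix.mul_sum, Matrix.trace_sum]
  refine Finset.sum_congr rfl fun i _ => ?_
  rw [Matrix.mul_smul, Matrix.trace_smul, ← Matrix.mul_kronecker_mul, Matrix.trace_kronecker,
    Matrix.one_mul, hA i, one_mul, smul_eq_mul]

end

noncomputable section

/-- **Compositionality for generalised composition (unbounded time).** If `𝕋` is a
generalised composition of `𝕊` and `𝕊′` with separable initial state and commutative
separable super-operators, then `K(𝕋, ↝ ∪ ↝′) ≤ SK(𝕊, ↝) + SK(𝕊′, ↝′)`. -/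
theorem gen_compositionality_K {Agent Cmd : Type} {n n' : ℕ}
    (hn : 0 < n) (hn' : 0 < n')
    (S : QSystem Agent Cmd (Fin n)) (S' : QSystem Agent Cmd (Fin n'))
    (T : QSystem Agent Cmd (Fin n × Fin n'))
    (hS : S.WellFormed) (hS' : S'.WellFormed) (hT : T.WellFormed)
    (hC : S.C ∩ S'.C = ∅)
    (pol pol' : Agent → Agent → Prop)
    (hpol : ∀ a ∈ S.A, pol a a) (hpol' : ∀ a ∈ S'.A, pol' a a)
    (hcompat : Compatible S.A S'.A pol pol')
    (hgen : IsGenComp S S' T)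
    (hsep : SeparableState T.ρ0)
    (hops : ∀ a ∈ T.A, ∀ c ∈ T.C, CommSeparableOp (T.Ecmd a c)) :
    Kdeg T (polUnion S.A S'.A pol pol') ≤ SK S pol + SK S' pol' := by
  have hSKpos := SK_nonneg S pol
  have hSKpos' := SK_nonneg S' pol'
  refine Real.sSup_le (fun x hx => ?_) (by linarith)
  obtain ⟨a, haT, α, hαv, rfl⟩ := hx
  obtain ⟨m, p, ρi, ρi', hp0, hp1, hρd, hρ'd, hσ0⟩ := hsep
  set PL : Agent × Cmd → Prop := fun q => q.1 ∈ S.A ∧ q.2 ∈ S.C with hPL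
  set PR : Agent × Cmd → Prop := fun q => q.1 ∈ S'.A ∧ q.2 ∈ S'.C with hPR
  set polU : Agent → Agent → Prop := polUnion S.A S'.A pol pol' with hpolU
  set αt : List (Agent × Cmd) := purge (nabla polU a) Set.univ α with hαt
  have hαtv : T.Valid αt := valid_purge hαv _
  have hlin : ∀ q ∈ α, IsLinearMap ℂ (T.Ecmd q.1 q.2) := fun q hq =>
    (hT.2.1 q.1 (hαv q hq).1 q.2 (hαv q hq).2).1
  have hlin2 : ∀ q ∈ αt, IsLinearMap ℂ (T.Ecmd q.1 q.2) := fun q hq =>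
    (hT.2.1 q.1 (hαtv q hq).1 q.2 (hαtv q hq).2).1
  have hβv : S.Valid (keep PL α) := fun q hq => (mem_keep hq).1
  have hβ'v : S'.Valid (keep PR α) := fun q hq => (mem_keep hq).1
  have hβtv : S.Valid (keep PL αt) := fun q hq => (mem_keep hq).1
  have hβ'tv : S'.Valid (keep PR αt) := fun q hq => (mem_keep hq).1
  -- evolved states
  have hX : T.run α T.ρ0 = ∑ i, (p i : ℂ) •
      ((S.run (keep PL α) (ρi i)) ⊗ₖ (S'.run (keep PR α) (ρi' i))) := by
    rw [hσ0, run_sum_smul α hlin _ _]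
    exact Finset.sum_congr rfl fun i _ => by
      rw [prod_run hn hn' hS hS' hC hgen hops α hαv _ _ (hρd i) (hρ'd i)]
  have hY : T.run αt T.ρ0 = ∑ i, (p i : ℂ) •
      ((S.run (keep PL αt) (ρi i)) ⊗ₖ (S'.run (keep PR αt) (ρi' i))) := by
    rw [hσ0, run_sum_smul αt hlin2 _ _]
    exact Finset.sum_congr rfl fun i _ => by
      rw [prod_run hn hn' hS hS' hC hgen hops αt hαtv _ _ (hρd i) (hρ'd i)]
  -- densities of all evolved factors
  have hτd : ∀ i, IsDensity (S.run (keep PL α) (ρi i)) :=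
    fun i => run_density hS.2.1 _ hβv _ (hρd i)
  have hτtd : ∀ i, IsDensity (S.run (keep PL αt) (ρi i)) :=
    fun i => run_density hS.2.1 _ hβtv _ (hρd i)
  have hτ'd : ∀ i, IsDensity (S'.run (keep PR α) (ρi' i)) :=
    fun i => run_density hS'.2.1 _ hβ'v _ (hρ'd i)
  have hτ'td : ∀ i, IsDensity (S'.run (keep PR αt) (ρi' i)) :=
    fun i => run_density hS'.2.1 _ hβ'tv _ (hρ'd i)
  -- marginal decompositions of the initial states
  have hdecS : S.ρ0 = ∑ i, (p i : ℂ) • ρi i := by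
    rw [← hgen.2.2.2.1, hσ0, ptrace2_sum]
    exact Finset.sum_congr rfl fun i _ => by
      rw [ptrace2_smul, ptrace2_kron, (hρ'd i).2, one_smul]
  have hdecS' : S'.ρ0 = ∑ i, (p i : ℂ) • ρi' i := by
    rw [← hgen.2.2.2.2.1, hσ0, ptrace1_sum]
    exact Finset.sum_congr rfl fun i _ => by
      rw [ptrace1_smul, ptrace1_kron, (hρd i).2, one_smul]
  -- now bound the measurement distance
  refine Real.sSup_le (fun y hy => ?_) (by linarith)
  obtain ⟨P, hPmem, rfl⟩ := hy
  rw [hgen.2.2.2.2.2.2.2.2 a] at hPmem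
  rcases (Set.mem_union _ _ _).mp hPmem with hPm | hPm
  · -- a measurement lifted from the first subsystem
    by_cases haS : a ∈ S.A
    swap
    · rw [if_neg haS] at hPm; exact absurd hPm (Set.notMem_empty _)
    rw [if_pos haS] at hPm
    obtain ⟨Q, hQ, rfl⟩ := hPm
    -- purge commutes with restriction
    have hkey : keep PL αt = purge (nabla pol a) Set.univ (keep PL α) := by
      rw [hαt, purge_eq_keep, purge_eq_keep, keep_keep, keep_keep]
      refine keep_congr (fun q => ?_) α
      constructor
      · rintro ⟨hq1, hq2⟩
        refine ⟨fun hmem => hq2 ?_, hq1⟩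
        intro hpu
        exact hmem ((Or.elim hpu (fun h => h.2.2)
          (fun h => (hcompat q.1 ⟨hq1.1, h.1⟩ a ⟨haS, h.2.1⟩).mpr h.2.2)))
      · rintro ⟨hq2, hq1⟩
        refine ⟨hq1, fun hmem => hq2 ?_⟩
        intro hp
        exact hmem (Or.inl ⟨hq1.1, haS, hp⟩)
    -- trace formulas
    have htr1 : ∀ l : Fin Q.m, ((Q.E l ⊗ₖ (1 : Matrix (Fin n') (Fin n') ℂ)) *
        T.run α T.ρ0).trace = ∑ i, (p i : ℂ) * ((Q.E l) * S.run (keep PL α) (ρi i)).trace := by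
      intro l
      rw [hX]
      exact trace_liftL_mix (Q.E l) _ _ _ (fun i => (hτ'd i).2)
    have htr2 : ∀ l : Fin Q.m, ((Q.E l ⊗ₖ (1 : Matrix (Fin n') (Fin n') ℂ)) *
        T.run αt T.ρ0).trace = ∑ i, (p i : ℂ) * ((Q.E l) * S.run (keep PL αt) (ρi i)).trace := by
      intro l
      rw [hY]
      exact trace_liftL_mix (Q.E l) _ _ _ (fun i => (hτ'td i).2)
    have step1 : dE (PMeas.liftLeft Q) (T.run α T.ρ0) (T.run αt T.ρ0)
        = (1/2) * ∑ l : Fin Q.m, ‖∑ i, (p i : ℂ) *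
          (((Q.E l) * S.run (keep PL α) (ρi i)).trace -
           ((Q.E l) * S.run (keep PL αt) (ρi i)).trace)‖ := by
      unfold dE
      congr 1
      refine Finset.sum_congr rfl fun l _ => ?_
      have hE : (PMeas.liftLeft Q).E l = Q.E l ⊗ₖ (1 : Matrix (Fin n') (Fin n') ℂ) := rfl
      rw [hE, htr1 l, htr2 l, ← Finset.sum_sub_distrib]
      congr 1
      exact Finset.sum_congr rfl fun i _ => by ring
    have step2 : dE (PMeas.liftLeft Q) (T.run α T.ρ0) (T.run αt T.ρ0)
        ≤ ∑ i, p i * dE Q (S.run (keep PL α) (ρi i)) (S.run (keep PL αt) (ρi i)) := by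
      rw [step1]
      have hb : ∀ l : Fin Q.m, ‖∑ i, (p i : ℂ) *
          (((Q.E l) * S.run (keep PL α) (ρi i)).trace -
           ((Q.E l) * S.run (keep PL αt) (ρi i)).trace)‖
          ≤ ∑ i, p i * ‖((Q.E l) * S.run (keep PL α) (ρi i)).trace -
           ((Q.E l) * S.run (keep PL αt) (ρi i)).trace‖ := by
        intro l
        refine (norm_sum_le _ _).trans (le_of_eq ?_)
        refine Finset.sum_congr rfl fun i _ => ?_
        rw [norm_mul, Complex.norm_real, Real.norm_eq_abs, abs_of_nonneg (hp0 i)]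
      calc (1/2) * ∑ l : Fin Q.m, ‖∑ i, (p i : ℂ) *
            (((Q.E l) * S.run (keep PL α) (ρi i)).trace -
             ((Q.E l) * S.run (keep PL αt) (ρi i)).trace)‖
          ≤ (1/2) * ∑ l : Fin Q.m, ∑ i, p i *
            ‖((Q.E l) * S.run (keep PL α) (ρi i)).trace -
             ((Q.E l) * S.run (keep PL αt) (ρi i)).trace‖ := by
            have := Finset.sum_le_sum fun l (_ : l ∈ Finset.univ) => hb l
            linarith
        _ = ∑ i, p i * dE Q (S.run (keep PL α) (ρi i)) (S.run (keep PL αt) (ρi i)) := by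
            rw [Finset.sum_comm, Finset.mul_sum]
            refine Finset.sum_congr rfl fun i _ => ?_
            unfold dE
            rw [← Finset.mul_sum]
            ring
    refine step2.trans ?_
    have step4 : ∑ i, p i * dE Q (S.run (keep PL α) (ρi i)) (S.run (keep PL αt) (ρi i))
        ≤ ∑ i, p i * Kdeg (S.withInit (ρi i)) pol := by
      refine Finset.sum_le_sum fun i _ => mul_le_mul_of_nonneg_left ?_ (hp0 i)
      have h1 : dE Q (S.run (keep PL α) (ρi i)) (S.run (keep PL αt) (ρi i))
          ≤ dM (S.M a) (S.run (keep PL α) (ρi i)) (S.run (keep PL αt) (ρi i)) :=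
        dE_le_dM (hS.2.2 a haS) (hτd i) (hτtd i) hQ
      refine h1.trans ?_
      refine le_csSup ⟨1, fun y hy => ?_⟩ ?_
      · obtain ⟨b, hb, γ, hγ, rfl⟩ := hy
        exact dM_le_one (hS.2.2 b hb) (run_density hS.2.1 γ hγ _ (hρd i))
          (run_density hS.2.1 _ (valid_purge hγ _) _ (hρd i))
      · exact ⟨a, haS, keep PL α, hβv, by rw [hkey]; rfl⟩
    refine step4.trans ?_
    have step5 : ∑ i, p i * Kdeg (S.withInit (ρi i)) pol ≤ SK S pol :=
      le_SK hS pol hp0 hp1 hρd hdecS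
    linarith
  · -- a measurement lifted from the second subsystem
    by_cases haS' : a ∈ S'.A
    swap
    · rw [if_neg haS'] at hPm; exact absurd hPm (Set.notMem_empty _)
    rw [if_pos haS'] at hPm
    obtain ⟨Q, hQ, rfl⟩ := hPm
    have hkey : keep PR αt = purge (nabla pol' a) Set.univ (keep PR α) := by
      rw [hαt, purge_eq_keep, purge_eq_keep, keep_keep, keep_keep]
      refine keep_congr (fun q => ?_) α
      constructor
      · rintro ⟨hq1, hq2⟩
        refine ⟨fun hmem => hq2 ?_, hq1⟩
        intro hpu
        exact hmem ((Or.elim hpu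
          (fun h => (hcompat q.1 ⟨h.1, hq1.1⟩ a ⟨h.2.1, haS'⟩).mp h.2.2)
          (fun h => h.2.2)))
      · rintro ⟨hq2, hq1⟩
        refine ⟨hq1, fun hmem => hq2 ?_⟩
        intro hp
        exact hmem (Or.inr ⟨hq1.1, haS', hp⟩)
    have htr1 : ∀ l : Fin Q.m, (((1 : Matrix (Fin n) (Fin n) ℂ) ⊗ₖ Q.E l) *
        T.run α T.ρ0).trace = ∑ i, (p i : ℂ) * ((Q.E l) * S'.run (keep PR α) (ρi' i)).trace := by
      intro l
      rw [hX]
      exact trace_liftR_mix (Q.E l) _ _ _ (fun i => (hτd i).2)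
    have htr2 : ∀ l : Fin Q.m, (((1 : Matrix (Fin n) (Fin n) ℂ) ⊗ₖ Q.E l) *
        T.run αt T.ρ0).trace = ∑ i, (p i : ℂ) * ((Q.E l) * S'.run (keep PR αt) (ρi' i)).trace := by
      intro l
      rw [hY]
      exact trace_liftR_mix (Q.E l) _ _ _ (fun i => (hτtd i).2)
    have step1 : dE (PMeas.liftRight Q) (T.run α T.ρ0) (T.run αt T.ρ0)
        = (1/2) * ∑ l : Fin Q.m, ‖∑ i, (p i : ℂ) *
          (((Q.E l) * S'.run (keep PR α) (ρi' i)).trace -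
           ((Q.E l) * S'.run (keep PR αt) (ρi' i)).trace)‖ := by
      unfold dE
      congr 1
      refine Finset.sum_congr rfl fun l _ => ?_
      have hE : (PMeas.liftRight Q).E l = (1 : Matrix (Fin n) (Fin n) ℂ) ⊗ₖ Q.E l := rfl
      rw [hE, htr1 l, htr2 l, ← Finset.sum_sub_distrib]
      congr 1
      exact Finset.sum_congr rfl fun i _ => by ring
    have step2 : dE (PMeas.liftRight Q) (T.run α T.ρ0) (T.run αt T.ρ0)
        ≤ ∑ i, p i * dE Q (S'.run (keep PR α) (ρi' i)) (S'.run (keep PR αt) (ρi' i)) := by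
      rw [step1]
      have hb : ∀ l : Fin Q.m, ‖∑ i, (p i : ℂ) *
          (((Q.E l) * S'.run (keep PR α) (ρi' i)).trace -
           ((Q.E l) * S'.run (keep PR αt) (ρi' i)).trace)‖
          ≤ ∑ i, p i * ‖((Q.E l) * S'.run (keep PR α) (ρi' i)).trace -
           ((Q.E l) * S'.run (keep PR αt) (ρi' i)).trace‖ := by
        intro l
        refine (norm_sum_le _ _).trans (le_of_eq ?_)
        refine Finset.sum_congr rfl fun i _ => ?_
        rw [norm_mul, Complex.norm_real, Real.norm_eq_abs, abs_of_nonneg (hp0 i)]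
      calc (1/2) * ∑ l : Fin Q.m, ‖∑ i, (p i : ℂ) *
            (((Q.E l) * S'.run (keep PR α) (ρi' i)).trace -
             ((Q.E l) * S'.run (keep PR αt) (ρi' i)).trace)‖
          ≤ (1/2) * ∑ l : Fin Q.m, ∑ i, p i *
            ‖((Q.E l) * S'.run (keep PR α) (ρi' i)).trace -
             ((Q.E l) * S'.run (keep PR αt) (ρi' i)).trace‖ := by
            have := Finset.sum_le_sum fun l (_ : l ∈ Finset.univ) => hb l
            linarith
        _ = ∑ i, p i * dE Q (S'.run (keep PR α) (ρi' i)) (S'.run (keep PR αt) (ρi' i)) := by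
            rw [Finset.sum_comm, Finset.mul_sum]
            refine Finset.sum_congr rfl fun i _ => ?_
            unfold dE
            rw [← Finset.mul_sum]
            ring
    refine step2.trans ?_
    have step4 : ∑ i, p i * dE Q (S'.run (keep PR α) (ρi' i)) (S'.run (keep PR αt) (ρi' i))
        ≤ ∑ i, p i * Kdeg (S'.withInit (ρi' i)) pol' := by
      refine Finset.sum_le_sum fun i _ => mul_le_mul_of_nonneg_left ?_ (hp0 i)
      have h1 : dE Q (S'.run (keep PR α) (ρi' i)) (S'.run (keep PR αt) (ρi' i))
          ≤ dM (S'.M a) (S'.run (keep PR α) (ρi' i)) (S'.run (keep PR αt) (ρi' i)) :=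
        dE_le_dM (hS'.2.2 a haS') (hτ'd i) (hτ'td i) hQ
      refine h1.trans ?_
      refine le_csSup ⟨1, fun y hy => ?_⟩ ?_
      · obtain ⟨b, hb, γ, hγ, rfl⟩ := hy
        exact dM_le_one (hS'.2.2 b hb) (run_density hS'.2.1 γ hγ _ (hρ'd i))
          (run_density hS'.2.1 _ (valid_purge hγ _) _ (hρ'd i))
      · exact ⟨a, haS', keep PR α, hβ'v, by rw [hkey]; rfl⟩
    refine step4.trans ?_
    have step5 : ∑ i, p i * Kdeg (S'.withInit (ρi' i)) pol' ≤ SK S' pol' :=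
      le_SK hS' pol' hp0 hp1 hρ'd hdecS'
    linarith



end
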